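/- Let A be a finite abelian group with |A| ≡ 3 (mod 4) and let f be an admissible function on A. If the 4-graph H_f contains no copy of H(4) and has exactly ((|A|+1)/16)·C(|A|+1,3) edges (the maximum possible for an H(4)-free 4-graph on |A|+1 vertices), then (f⋆f)(x) = 1 for every nonzero x ∈ A. -/
import Mathlib


def gT {V : Type*} (e : V → V → ℤ) : V → V → V → ℤ :=
  fun x y z => e x y * e y z * e z x

def TwoGraphIso {V₁ V₂ : Type*} (g₁ : V₁ → V₁ → V₁ → ℤ) (g₂ : V₂ → V₂ → V₂ → ℤ) : Prop :=
  ∃ φ : V₁ ≃ V₂, ∀ x y z, g₂ (φ x) (φ y) (φ z) = g₁ x y z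

def restrict3 {W : Type*} (h : W → W → W → ℤ) (A : Finset W) :
    {a // a ∈ A} → {a // a ∈ A} → {a // a ∈ A} → ℤ :=
  fun x y z => h x.1 y.1 z.1

/-- The augmentation `T⁺`: a new vertex `∞` (here `none`) with all edges directed
towards it. -/
def aug {V : Type*} (e : V → V → ℤ) : Option V → Option V → ℤ
  | some a, some b => e a b
  | some _, none => 1
  | none, some _ => -1
  | none, none => 0

open scoped Classical in
noncomputable def chi {F : Type*} [Field F] [Fintype F] (x : F) : ℤ :=
  if x = 0 then 0 else if IsSquare x then 1 else -1

instance : Fact (Nat.Prime 3) := ⟨by norm_num⟩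

/-- The Paley oriented two-graph `g₃` on the `4` vertices `F₃ ∪ {∞}` (the augmented
Paley tournament for `q = 3` is `T_χ` on `ZMod 3` augmented by `∞`). -/
noncomputable def gThree : Option (ZMod 3) → Option (ZMod 3) → Option (ZMod 3) → ℤ :=
  gT (aug (fun x y : ZMod 3 => chi (y - x)))

/-- The `4`-graph `H_f` on the `|A| + 1` vertices of `T_f⁺`, whose edges are the
`4`-element subsets `X` with `g_{T_f⁺}|_X ≅ g₃`.  Here `T_f` is the tournament on `A`
with sign function `e(x,y) = f(y-x)`. -/
noncomputable def hypOf {A : Type*} [AddCommGroup A] (f : A → ℤ) :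
    Set (Finset (Option A)) :=
  {X | X.card = 4 ∧ TwoGraphIso gThree (restrict3 (gT (aug (fun x y => f (y - x)))) X)}

section Stmt17Aux

open Finset

variable {A : Type} [AddCommGroup A]

/-- The augmented tournament sign function. -/
def eE (f : A → ℤ) : Option A → Option A → ℤ := aug fun x y => f (y - x)

/-- Its oriented two-graph. -/
def gG (f : A → ℤ) : Option A → Option A → Option A → ℤ := gT (eE f)

/-- The coboundary `S`. -/
def sS (f : A → ℤ) (a b c d : Option A) : ℤ :=
  gG f b c d - gG f a c d + gG f a b d - gG f a b c

lemma eanti (f : A → ℤ) (hodd : ∀ a, f (-a) = - f a) (x y : Option A) :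
    eE f y x = - eE f x y := by
  cases x with
  | none =>
    cases y with
    | none => simp [eE, aug]
    | some b => simp [eE, aug]
  | some a =>
    cases y with
    | none => simp [eE, aug]
    | some b =>
      show f (a - b) = -f (b - a)
      rw [← neg_sub b a]
      exact hodd _

lemma gcyc' (f : A → ℤ) (x y z : Option A) : gG f x y z = gG f y z x := by
  simp only [gG, gT]; ring

lemma gcyc2 (f : A → ℤ) (x y z : Option A) : gG f x y z = gG f z x y := by
  simp only [gG, gT]; ring

lemma gswap1 (f : A → ℤ) (hodd : ∀ a, f (-a) = - f a) (x y z : Option A) :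
    gG f y x z = - gG f x y z := by
  simp only [gG, gT]
  rw [eanti f hodd x y, eanti f hodd z x, eanti f hodd y z]; ring

lemma gswap2 (f : A → ℤ) (hodd : ∀ a, f (-a) = - f a) (x y z : Option A) :
    gG f x z y = - gG f x y z := by
  simp only [gG, gT]
  rw [eanti f hodd z x, eanti f hodd y z, eanti f hodd x y]; ring

lemma gswap3 (f : A → ℤ) (hodd : ∀ a, f (-a) = - f a) (x y z : Option A) :
    gG f z y x = - gG f x y z := by
  simp only [gG, gT]
  rw [eanti f hodd y z, eanti f hodd x y, eanti f hodd z x]; ring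

variable (f : A → ℤ)

lemma Sswap01 (hodd : ∀ a, f (-a) = - f a) (a b c d : Option A) :
    sS f b a c d = - sS f a b c d := by
  simp only [sS]
  rw [gswap1 f hodd a b d, gswap1 f hodd a b c]; ring

lemma Sswap12 (hodd : ∀ a, f (-a) = - f a) (a b c d : Option A) :
    sS f a c b d = - sS f a b c d := by
  simp only [sS]
  rw [gswap1 f hodd b c d, gswap2 f hodd a b c]; ring

lemma Sswap23 (hodd : ∀ a, f (-a) = - f a) (a b c d : Option A) :
    sS f a b d c = - sS f a b c d := by
  simp only [sS]
  rw [gswap2 f hodd b c d, gswap2 f hodd a c d]; ring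

lemma Sswap02 (hodd : ∀ a, f (-a) = - f a) (a b c d : Option A) :
    sS f c b a d = - sS f a b c d := by
  simp only [sS]
  rw [gswap1 f hodd a b d, gswap1 f hodd a c d, gswap1 f hodd b c d,
    gswap3 f hodd a b c]; ring

lemma Sswap03 (hodd : ∀ a, f (-a) = - f a) (a b c d : Option A) :
    sS f d b c a = - sS f a b c d := by
  simp only [sS]
  rw [gcyc2 f b c a, gswap3 f hodd a c d, gswap3 f hodd a b d, gcyc' f d b c]; ring

lemma Sswap13 (hodd : ∀ a, f (-a) = - f a) (a b c d : Option A) :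
    sS f a d c b = - sS f a b c d := by
  simp only [sS]
  rw [gswap3 f hodd b c d, gswap2 f hodd a b c, gswap2 f hodd a b d,
    gswap2 f hodd a c d]; ring

lemma sswap_eval (hodd : ∀ a, f (-a) = - f a) (v : Fin 4 → Option A) (x y : Fin 4) :
    sS f (v (Equiv.swap x y 0)) (v (Equiv.swap x y 1)) (v (Equiv.swap x y 2))
        (v (Equiv.swap x y 3)) ^ 2
      = sS f (v 0) (v 1) (v 2) (v 3) ^ 2 := by
  fin_cases x <;> fin_cases y <;>
      simp (config := { decide := true }) only [Equiv.swap_apply_def, if_true, if_false]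
  · exact rfl
  · rw [Sswap01 f hodd, neg_sq]; try exact rfl
  · rw [Sswap02 f hodd, neg_sq]; try exact rfl
  · rw [Sswap03 f hodd, neg_sq]; try exact rfl
  · rw [Sswap01 f hodd, neg_sq]; try exact rfl
  · exact rfl
  · rw [Sswap12 f hodd, neg_sq]; try exact rfl
  · rw [Sswap13 f hodd, neg_sq]; try exact rfl
  · rw [Sswap02 f hodd, neg_sq]; try exact rfl
  · rw [Sswap12 f hodd, neg_sq]; try exact rfl
  · exact rfl
  · rw [Sswap23 f hodd, neg_sq]; try exact rfl
  · rw [Sswap03 f hodd, neg_sq]; try exact rfl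
  · rw [Sswap13 f hodd, neg_sq]; try exact rfl
  · rw [Sswap23 f hodd, neg_sq]; try exact rfl
  · exact rfl

lemma sperm (hodd : ∀ a, f (-a) = - f a) (σ : Equiv.Perm (Fin 4))
    (v : Fin 4 → Option A) :
    sS f (v (σ 0)) (v (σ 1)) (v (σ 2)) (v (σ 3)) ^ 2
      = sS f (v 0) (v 1) (v 2) (v 3) ^ 2 := by
  induction σ using Equiv.Perm.swap_induction_on generalizing v
  · exact rfl
  · next σ' x y hxy ih =>
      simp only [Equiv.Perm.mul_apply]
      exact (ih fun k => v (Equiv.swap x y k)).trans (sswap_eval f hodd v x y)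

end Stmt17Aux
section Stmt17Aux2

open Finset

lemma chi_one' : chi (1 : ZMod 3) = 1 := by
  simp only [chi]
  rw [if_neg (by decide), if_pos ⟨1, by decide⟩]

lemma chi_two' : chi (2 : ZMod 3) = -1 := by
  have hns : ¬ IsSquare (2 : ZMod 3) := by
    rintro ⟨r, hr⟩
    fin_cases r <;> exact absurd hr (by decide)
  simp only [chi]
  rw [if_neg (by decide), if_neg hns]

lemma g3a' : gThree (some 0) (some 1) (some 2) = 1 := by
  have h1 : (1 - 0 : ZMod 3) = 1 := by decide
  have h2 : (2 - 1 : ZMod 3) = 1 := by decide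
  have h3 : (0 - 2 : ZMod 3) = 1 := by decide
  simp only [gThree, gT, aug, h1, h2, h3, chi_one']
  norm_num

lemma g3b' : gThree none (some 1) (some 2) = -1 := by
  have h2 : (2 - 1 : ZMod 3) = 1 := by decide
  simp only [gThree, gT, aug, h2, chi_one']
  norm_num

lemma g3c' : gThree none (some 0) (some 2) = 1 := by
  have h2 : (2 - 0 : ZMod 3) = 2 := by decide
  simp only [gThree, gT, aug, h2, chi_two']
  norm_num

lemma g3d' : gThree none (some 0) (some 1) = -1 := by
  have h2 : (1 - 0 : ZMod 3) = 1 := by decide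
  simp only [gThree, gT, aug, h2, chi_one']
  norm_num

/-- The canonical ordering of the four vertices of `g₃`. -/
def oFour : Fin 4 → Option (ZMod 3) := ![none, some 0, some 1, some 2]

lemma oFour_inj : Function.Injective oFour := by decide

variable {A : Type} [AddCommGroup A]

lemma img4 {β : Type*} [DecidableEq β] (u : Fin 4 → β) :
    Finset.image u Finset.univ = {u 0, u 1, u 2, u 3} := by
  have h : (Finset.univ : Finset (Fin 4)) = {0, 1, 2, 3} := by decide
  rw [h]
  simp [Finset.image_insert]

lemma edge_tuple [DecidableEq A] (f : A → ℤ) (X : Finset (Option A))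
    (h : X ∈ hypOf f) :
    ∃ v : Fin 4 → Option A, Function.Injective v ∧ X = Finset.image v Finset.univ ∧
      sS f (v 0) (v 1) (v 2) (v 3) = 4 := by
  simp only [hypOf, Set.mem_setOf_eq] at h
  obtain ⟨h4, φ, hφ⟩ := h
  have key : ∀ x y z : Option (ZMod 3),
      gG f (φ x).1 (φ y).1 (φ z).1 = gThree x y z := fun x y z => hφ x y z
  refine ⟨fun i => (φ (oFour i)).1, ?_, ?_, ?_⟩
  · intro i j hij
    exact oFour_inj (φ.injective (Subtype.ext hij))
  · have hsub : Finset.image (fun i => (φ (oFour i)).1) Finset.univ ⊆ X := by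
      intro t ht
      obtain ⟨i, _, rfl⟩ := Finset.mem_image.mp ht
      exact (φ (oFour i)).2
    refine (Finset.eq_of_subset_of_card_le hsub ?_).symm
    rw [Finset.card_image_of_injective _ (fun i j hij =>
      oFour_inj (φ.injective (Subtype.ext hij)))]
    simp [h4]
  · show sS f (φ (oFour 0)).1 (φ (oFour 1)).1 (φ (oFour 2)).1 (φ (oFour 3)).1 = 4
    have e0 : oFour 0 = none := rfl
    have e1 : oFour 1 = some 0 := rfl
    have e2 : oFour 2 = some 1 := rfl
    have e3 : oFour 3 = some 2 := rfl
    rw [e0, e1, e2, e3]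
    simp only [sS]
    rw [key (some 0) (some 1) (some 2), key none (some 1) (some 2),
      key none (some 0) (some 2), key none (some 0) (some 1),
      g3a', g3b', g3c', g3d']
    norm_num

end Stmt17Aux2
section Stmt17Aux3

open Finset

variable {A : Type} [AddCommGroup A] [Fintype A]

lemma stmt17_bound [DecidableEq A] (f : A → ℤ) (hodd : ∀ a, f (-a) = - f a) :
    384 * ((hypOf f).ncard : ℤ) ≤
      ∑ a : Option A, ∑ b : Option A, ∑ c : Option A, ∑ d : Option A,
        sS f a b c d ^ 2 := by
  classical
  have hfin : (hypOf f).Finite := Set.toFinite _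
  set E : Finset (Finset (Option A)) := hfin.toFinset with hE
  have hNE : (hypOf f).ncard = E.card := Set.ncard_eq_toFinset_card _ hfin
  have hex : ∀ X : Finset (Option A), ∃ v : Fin 4 → Option A, X ∈ E →
      (Function.Injective v ∧ X = Finset.image v Finset.univ ∧
        sS f (v 0) (v 1) (v 2) (v 3) = 4) := by
    intro X
    by_cases hX : X ∈ E
    · have hX' : X ∈ hypOf f := by rwa [hE, Set.Finite.mem_toFinset] at hX
      obtain ⟨v, hv⟩ := edge_tuple f X hX'
      exact ⟨v, fun _ => hv⟩
    · exact ⟨fun _ => none, fun h => absurd h hX⟩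
  choose v hv using hex
  set Φ : Finset (Option A) × Equiv.Perm (Fin 4) →
      Option A × Option A × Option A × Option A :=
    fun p => (v p.1 (p.2 0), v p.1 (p.2 1), v p.1 (p.2 2), v p.1 (p.2 3)) with hΦ
  have himg : ∀ X ∈ E, ∀ σ : Equiv.Perm (Fin 4),
      Finset.image (fun k => v X (σ k)) Finset.univ = X := by
    intro X hX σ
    have h1 : Finset.image (fun k => v X (σ k)) Finset.univ
        = Finset.image (v X) (Finset.image σ Finset.univ) := by
      rw [Finset.image_image]; rfl
    rw [h1, Finset.image_univ_equiv]
    exact ((hv X hX).2.1).symm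
  have hinj : ∀ p ∈ E ×ˢ (Finset.univ : Finset (Equiv.Perm (Fin 4))),
      ∀ q ∈ E ×ˢ (Finset.univ : Finset (Equiv.Perm (Fin 4))), Φ p = Φ q → p = q := by
    rintro ⟨X, σ⟩ hp ⟨Y, τ⟩ hq h
    have hX : X ∈ E := (Finset.mem_product.mp hp).1
    have hY : Y ∈ E := (Finset.mem_product.mp hq).1
    simp only [hΦ, Prod.mk.injEq] at h
    obtain ⟨h0, h1, h2, h3⟩ := h
    have hXY : X = Y := by
      rw [← himg X hX σ, ← himg Y hY τ, img4, img4, h0, h1, h2, h3]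
    subst hXY
    have hvinj := (hv X hX).1
    have hστ : σ = τ := by
      refine Equiv.ext fun i => ?_
      fin_cases i
      · exact hvinj h0
      · exact hvinj h1
      · exact hvinj h2
      · exact hvinj h3
    rw [hστ]
  have hval : ∀ p ∈ E ×ˢ (Finset.univ : Finset (Equiv.Perm (Fin 4))),
      sS f (Φ p).1 (Φ p).2.1 (Φ p).2.2.1 (Φ p).2.2.2 ^ 2 = 16 := by
    rintro ⟨X, σ⟩ hp
    have hX : X ∈ E := (Finset.mem_product.mp hp).1
    show sS f (v X (σ 0)) (v X (σ 1)) (v X (σ 2)) (v X (σ 3)) ^ 2 = 16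
    rw [sperm f hodd σ (v X), (hv X hX).2.2]
    norm_num
  calc 384 * ((hypOf f).ncard : ℤ)
      = ∑ _p ∈ E ×ˢ (Finset.univ : Finset (Equiv.Perm (Fin 4))), (16 : ℤ) := by
        rw [Finset.sum_const, Finset.card_product, Finset.card_univ, Fintype.card_perm,
          Fintype.card_fin, hNE, nsmul_eq_mul]
        norm_num [Nat.factorial]
        ring
    _ = ∑ p ∈ E ×ˢ (Finset.univ : Finset (Equiv.Perm (Fin 4))),
          sS f (Φ p).1 (Φ p).2.1 (Φ p).2.2.1 (Φ p).2.2.2 ^ 2 :=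
        (Finset.sum_congr rfl fun p hp => (hval p hp).symm)
    _ = ∑ t ∈ (E ×ˢ (Finset.univ : Finset (Equiv.Perm (Fin 4)))).image Φ,
          sS f t.1 t.2.1 t.2.2.1 t.2.2.2 ^ 2 :=
        (Finset.sum_image (f := fun t : Option A × Option A × Option A × Option A =>
          sS f t.1 t.2.1 t.2.2.1 t.2.2.2 ^ 2) hinj).symm
    _ ≤ ∑ t : Option A × Option A × Option A × Option A,
          sS f t.1 t.2.1 t.2.2.1 t.2.2.2 ^ 2 :=
        Finset.sum_le_sum_of_subset_of_nonneg (Finset.subset_univ _)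
          (fun t _ _ => sq_nonneg _)
    _ = ∑ a : Option A, ∑ b : Option A, ∑ c : Option A, ∑ d : Option A,
          sS f a b c d ^ 2 := by
        rw [Fintype.sum_prod_type]
        refine Finset.sum_congr rfl fun a _ => ?_
        rw [Fintype.sum_prod_type]
        refine Finset.sum_congr rfl fun b _ => ?_
        rw [Fintype.sum_prod_type]

end Stmt17Aux3
section Stmt17Aux4
open scoped Classical

open Finset

variable {A : Type} [AddCommGroup A] [Fintype A]

lemma sum_f_zero (f : A → ℤ) (hodd : ∀ a, f (-a) = - f a) : ∑ a : A, f a = 0 := by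
  have h : ∑ a : A, f a = ∑ a : A, f (-a) :=
    Fintype.sum_equiv (Equiv.neg A) _ _ (fun a => by rw [Equiv.neg_apply, neg_neg])
  have h2 : ∑ a : A, f (-a) = -∑ a : A, f a := by
    rw [← Finset.sum_neg_distrib]
    exact Finset.sum_congr rfl fun a _ => hodd a
  omega

lemma fsq (f : A → ℤ) (hzero : ∀ a, f a = 0 ↔ a = 0)
    (hpm : ∀ a, f a = 1 ∨ f a = 0 ∨ f a = -1) (t : A) :
    f t ^ 2 = if t = 0 then 0 else 1 := by
  by_cases h : t = 0
  · simp [h, (hzero (0 : A)).mpr rfl]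
  · rcases hpm t with h1 | h1 | h1
    · simp [h, h1]
    · exact absurd ((hzero t).mp h1) h
    · simp [h, h1]

lemma esq (f : A → ℤ) (hzero : ∀ a, f a = 0 ↔ a = 0)
    (hpm : ∀ a, f a = 1 ∨ f a = 0 ∨ f a = -1) (u v : Option A) :
    eE f u v ^ 2 = if u = v then 0 else 1 := by
  classical
  cases u with
  | none =>
    cases v with
    | none => simp [eE, aug]
    | some b => simp [eE, aug]
  | some a =>
    cases v with
    | none => simp [eE, aug]
    | some b =>
      show f (b - a) ^ 2 = _
      rw [fsq f hzero hpm]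
      by_cases h : a = b
      · simp [h]
      · rw [if_neg (sub_ne_zero.mpr (Ne.symm h)), if_neg (by simpa using h)]

lemma shift_sum_zero (f : A → ℤ) (hodd : ∀ a, f (-a) = - f a) (b : A) :
    ∑ c : A, f (b - c) = 0 := by
  have h : ∑ c : A, f (b - c) = ∑ c : A, f c :=
    Fintype.sum_equiv (Equiv.subLeft b) _ _ (fun c => by rw [Equiv.subLeft_apply])
  rw [h, sum_f_zero f hodd]

lemma conv_neg (f : A → ℤ) (hodd : ∀ a, f (-a) = - f a) (a b : A) :
    ∑ c : A, f (a - c) * f (b - c) = -(∑ t : A, f ((b - a) - t) * f t) := by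
  have h1 : ∑ c : A, f (a - c) * f (b - c) = ∑ u : A, f u * f ((b - a) + u) :=
    Fintype.sum_equiv (Equiv.subLeft a) _ _ (fun c => by
      rw [Equiv.subLeft_apply]
      congr 2
      abel)
  have h3 : ∑ t : A, f ((b - a) - t) * f t = ∑ u : A, f ((b - a) + u) * f (-u) :=
    Fintype.sum_equiv (Equiv.neg A) _ _ (fun t => by
      rw [Equiv.neg_apply, ← sub_eq_add_neg, neg_neg])
  rw [h1, h3, ← Finset.sum_neg_distrib]
  refine Finset.sum_congr rfl fun u _ => ?_
  rw [hodd u]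
  ring

lemma G2val (f : A → ℤ) (hzero : ∀ a, f a = 0 ↔ a = 0)
    (hpm : ∀ a, f a = 1 ∨ f a = 0 ∨ f a = -1) :
    ∑ x : Option A, ∑ y : Option A, ∑ z : Option A, gG f x y z ^ 2
      = (Fintype.card (Option A) : ℤ) * ((Fintype.card (Option A) : ℤ) - 1)
          * ((Fintype.card (Option A) : ℤ) - 2) := by
  classical
  have hinner : ∀ x y : Option A, x ≠ y →
      ∑ z : Option A, eE f y z ^ 2 * eE f z x ^ 2 = (Fintype.card (Option A) : ℤ) - 2 := by
    intro x y hxy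
    have hpt : ∀ z : Option A, eE f y z ^ 2 * eE f z x ^ 2
        = 1 - ((if z = x then (1 : ℤ) else 0) + (if z = y then (1 : ℤ) else 0)) := by
      intro z
      rw [esq f hzero hpm y z, esq f hzero hpm z x]
      by_cases hzx : z = x <;> by_cases hzy : z = y
      · exact absurd (hzx.symm.trans hzy) hxy
      · rw [if_neg (fun h : y = z => hzy h.symm), if_pos hzx, if_pos hzx, if_neg hzy]; ring
      · rw [if_pos hzy.symm, if_neg hzx, if_neg hzx, if_pos hzy]; ring
      · rw [if_neg (fun h : y = z => hzy h.symm), if_neg hzx, if_neg hzx, if_neg hzy]; ring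
    rw [Finset.sum_congr rfl fun z _ => hpt z, Finset.sum_sub_distrib,
      Finset.sum_add_distrib, Finset.sum_const, Finset.card_univ,
      Finset.sum_ite_eq' Finset.univ x (fun _ => (1 : ℤ)),
      Finset.sum_ite_eq' Finset.univ y (fun _ => (1 : ℤ)),
      if_pos (Finset.mem_univ x), if_pos (Finset.mem_univ y), nsmul_eq_mul, mul_one]
    ring
  have houter : ∀ x y : Option A,
      eE f x y ^ 2 * ∑ z : Option A, eE f y z ^ 2 * eE f z x ^ 2
        = if x = y then 0 else ((Fintype.card (Option A) : ℤ) - 2) := by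
    intro x y
    by_cases h : x = y
    · rw [esq f hzero hpm x y, if_pos h, if_pos h, zero_mul]
    · rw [esq f hzero hpm x y, if_neg h, if_neg h, one_mul, hinner x y h]
  calc ∑ x : Option A, ∑ y : Option A, ∑ z : Option A, gG f x y z ^ 2
      = ∑ x : Option A, ∑ y : Option A,
          eE f x y ^ 2 * ∑ z : Option A, eE f y z ^ 2 * eE f z x ^ 2 := by
        refine Finset.sum_congr rfl fun x _ => Finset.sum_congr rfl fun y _ => ?_
        rw [Finset.mul_sum]
        refine Finset.sum_congr rfl fun z _ => ?_
        simp only [gG, gT]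
        ring
    _ = ∑ x : Option A, ∑ y : Option A,
          (if x = y then 0 else ((Fintype.card (Option A) : ℤ) - 2)) :=
        Finset.sum_congr rfl fun x _ => Finset.sum_congr rfl fun y _ => houter x y
    _ = ∑ x : Option A, (((Fintype.card (Option A) : ℤ))
          * ((Fintype.card (Option A) : ℤ) - 2) - ((Fintype.card (Option A) : ℤ) - 2)) := by
        refine Finset.sum_congr rfl fun x _ => ?_
        have hpt2 : ∀ y : Option A, (if x = y then (0 : ℤ) else ((Fintype.card (Option A) : ℤ) - 2))
            = ((Fintype.card (Option A) : ℤ) - 2)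
              - (if y = x then ((Fintype.card (Option A) : ℤ) - 2) else 0) := by
          intro y
          by_cases h : x = y
          · rw [if_pos h, if_pos h.symm]; ring
          · rw [if_neg h, if_neg (fun hh : y = x => h hh.symm)]; ring
        rw [Finset.sum_congr rfl fun y _ => hpt2 y, Finset.sum_sub_distrib,
          Finset.sum_const, Finset.card_univ,
          Finset.sum_ite_eq' Finset.univ x (fun _ => ((Fintype.card (Option A) : ℤ) - 2)),
          if_pos (Finset.mem_univ x), nsmul_eq_mul]
    _ = (Fintype.card (Option A) : ℤ) * ((Fintype.card (Option A) : ℤ)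
          * ((Fintype.card (Option A) : ℤ) - 2) - ((Fintype.card (Option A) : ℤ) - 2)) := by
        rw [Finset.sum_const, Finset.card_univ, nsmul_eq_mul]
    _ = (Fintype.card (Option A) : ℤ) * ((Fintype.card (Option A) : ℤ) - 1)
          * ((Fintype.card (Option A) : ℤ) - 2) := by ring

end Stmt17Aux4
section Stmt17Aux5
open scoped Classical
open Finset

variable {A : Type} [AddCommGroup A] [Fintype A]

lemma Rval (f : A → ℤ) (hzero : ∀ a, f a = 0 ↔ a = 0)
    (hodd : ∀ a, f (-a) = - f a)
    (hpm : ∀ a, f a = 1 ∨ f a = 0 ∨ f a = -1) :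
    ∑ u : Option A, ∑ v : Option A,
        (∑ x : Option A, gG f x u v) * (∑ x : Option A, gG f x u v)
      = (Fintype.card A : ℤ)
          * ∑ c : A, (if c = 0 then 0 else (1 - ∑ a : A, f (c - a) * f a) ^ 2) := by
  have hA : ∀ u v : Option A, (∑ x : Option A, gG f x u v)
      = -(eE f u v * ∑ x : Option A, eE f x u * eE f x v) := by
    intro u v
    calc ∑ x : Option A, gG f x u v
        = ∑ x : Option A, -(eE f u v * (eE f x u * eE f x v)) := by
          refine Finset.sum_congr rfl fun x _ => ?_
          simp only [gG, gT]
          rw [eanti f hodd x v]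
          ring
      _ = -(eE f u v * ∑ x : Option A, eE f x u * eE f x v) := by
          rw [Finset.sum_neg_distrib, Finset.mul_sum]
  have hsq : ∀ u v : Option A,
      (∑ x : Option A, gG f x u v) * (∑ x : Option A, gG f x u v)
        = eE f u v ^ 2 * (∑ x : Option A, eE f x u * eE f x v) ^ 2 := by
    intro u v
    rw [hA u v]
    ring
  have hDn : ∀ b : A, (∑ x : Option A, eE f x none * eE f x (some b)) = 0 := by
    intro b
    rw [Fintype.sum_option]
    have h1 : eE f none none = 0 := rfl
    have h2 : ∀ c : A, eE f (some c) none * eE f (some c) (some b) = f (b - c) := by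
      intro c
      show (1 : ℤ) * f (b - c) = f (b - c)
      ring
    rw [h1, Finset.sum_congr rfl fun c _ => h2 c, shift_sum_zero f hodd b]
    ring
  have hDn' : ∀ a : A, (∑ x : Option A, eE f x (some a) * eE f x none) = 0 := by
    intro a
    rw [Fintype.sum_option]
    have h2 : ∀ c : A, eE f (some c) (some a) * eE f (some c) none = f (a - c) := by
      intro c
      show f (a - c) * 1 = f (a - c)
      ring
    rw [show eE f none (some a) * eE f none none = 0 from by
      show (-1 : ℤ) * 0 = 0; ring]
    rw [Finset.sum_congr rfl fun c _ => h2 c, shift_sum_zero f hodd a]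
    ring
  have hDss : ∀ a b : A, (∑ x : Option A, eE f x (some a) * eE f x (some b))
      = 1 - ∑ t : A, f ((b - a) - t) * f t := by
    intro a b
    rw [Fintype.sum_option]
    have h1 : eE f none (some a) * eE f none (some b) = 1 := by
      show (-1 : ℤ) * (-1) = 1; ring
    have h2 : ∀ c : A, eE f (some c) (some a) * eE f (some c) (some b)
        = f (a - c) * f (b - c) := fun c => rfl
    rw [h1, Finset.sum_congr rfl fun c _ => h2 c, conv_neg f hodd a b]
    ring
  calc ∑ u : Option A, ∑ v : Option A,
        (∑ x : Option A, gG f x u v) * (∑ x : Option A, gG f x u v)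
      = ∑ u : Option A, ∑ v : Option A,
          eE f u v ^ 2 * (∑ x : Option A, eE f x u * eE f x v) ^ 2 :=
        Finset.sum_congr rfl fun u _ => Finset.sum_congr rfl fun v _ => hsq u v
    _ = (Fintype.card A : ℤ)
          * ∑ c : A, (if c = 0 then 0 else (1 - ∑ a : A, f (c - a) * f a) ^ 2) := by
        have hnone : (∑ v : Option A,
            eE f none v ^ 2 * (∑ x : Option A, eE f x none * eE f x v) ^ 2) = 0 := by
          have hT : ∀ v : Option A,
              eE f none v ^ 2 * (∑ x : Option A, eE f x none * eE f x v) ^ 2 = 0 := by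
            intro v
            cases v with
            | none => rw [show eE f none none = 0 from rfl]; ring
            | some b => rw [hDn b]; ring
          calc (∑ v : Option A,
              eE f none v ^ 2 * (∑ x : Option A, eE f x none * eE f x v) ^ 2)
              = ∑ _v : Option A, (0 : ℤ) := Finset.sum_congr rfl fun v _ => hT v
            _ = 0 := Finset.sum_const_zero
        have hsome : ∀ a : A, (∑ v : Option A,
            eE f (some a) v ^ 2 * (∑ x : Option A, eE f x (some a) * eE f x v) ^ 2)
            = ∑ c : A, (if c = 0 then 0 else (1 - ∑ t : A, f (c - t) * f t) ^ 2) := by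
          intro a
          have hterm : ∀ b : A,
              eE f (some a) (some b) ^ 2
                  * (∑ x : Option A, eE f x (some a) * eE f x (some b)) ^ 2
              = (if (b - a) = 0 then 0
                  else (1 - ∑ t : A, f ((b - a) - t) * f t) ^ 2) := by
            intro b
            rw [hDss a b, esq f hzero hpm (some a) (some b)]
            by_cases h : a = b
            · rw [if_pos (by simp [h] : b - a = 0), if_pos (by rw [h])]
              ring
            · rw [if_neg (sub_ne_zero.mpr (Ne.symm h)), if_neg (by simpa using h)]
              ring
          have hre : (∑ b : A, (if (b - a) = 0 then (0:ℤ)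
              else (1 - ∑ t : A, f ((b - a) - t) * f t) ^ 2))
              = ∑ c : A, (if c = 0 then 0 else (1 - ∑ t : A, f (c - t) * f t) ^ 2) :=
            Fintype.sum_equiv (Equiv.subRight a) _ _ (fun b => by
              rw [Equiv.subRight_apply])
          calc (∑ v : Option A,
              eE f (some a) v ^ 2 * (∑ x : Option A, eE f x (some a) * eE f x v) ^ 2)
              = eE f (some a) none ^ 2
                  * (∑ x : Option A, eE f x (some a) * eE f x none) ^ 2
                + ∑ b : A, eE f (some a) (some b) ^ 2
                    * (∑ x : Option A, eE f x (some a) * eE f x (some b)) ^ 2 :=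
              Fintype.sum_option _
            _ = ∑ b : A, (if (b - a) = 0 then (0:ℤ)
                  else (1 - ∑ t : A, f ((b - a) - t) * f t) ^ 2) := by
                rw [hDn' a, Finset.sum_congr rfl fun b _ => hterm b]
                ring
            _ = ∑ c : A, (if c = 0 then 0 else (1 - ∑ t : A, f (c - t) * f t) ^ 2) := hre
        calc (∑ u : Option A, ∑ v : Option A,
            eE f u v ^ 2 * (∑ x : Option A, eE f x u * eE f x v) ^ 2)
            = (∑ v : Option A,
                eE f none v ^ 2 * (∑ x : Option A, eE f x none * eE f x v) ^ 2)
              + ∑ a : A, (∑ v : Option A,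
                eE f (some a) v ^ 2 * (∑ x : Option A, eE f x (some a) * eE f x v) ^ 2) :=
            Fintype.sum_option _
          _ = ∑ a : A, (∑ c : A, (if c = 0 then (0:ℤ)
                else (1 - ∑ t : A, f (c - t) * f t) ^ 2)) := by
              rw [hnone, Finset.sum_congr rfl fun a _ => hsome a]
              ring
          _ = (Fintype.card A : ℤ)
                * ∑ c : A, (if c = 0 then 0 else (1 - ∑ a : A, f (c - a) * f a) ^ 2) := by
              rw [Finset.sum_const, Finset.card_univ, nsmul_eq_mul]

end Stmt17Aux5
section Stmt17Aux6
open scoped Classical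
open Finset

variable {A : Type} [AddCommGroup A] [Fintype A]

lemma Tval (f : A → ℤ) (hzero : ∀ a, f a = 0 ↔ a = 0)
    (hodd : ∀ a, f (-a) = - f a)
    (hpm : ∀ a, f a = 1 ∨ f a = 0 ∨ f a = -1) :
    (∑ a : Option A, ∑ b : Option A, ∑ c : Option A, ∑ d : Option A, sS f a b c d ^ 2)
      = 4 * ((Fintype.card A : ℤ) + 1) ^ 2 * (Fintype.card A : ℤ)
          * ((Fintype.card A : ℤ) - 1)
        - 12 * (Fintype.card A : ℤ)
            * ∑ c : A, (if c = 0 then 0 else (1 - ∑ a : A, f (c - a) * f a) ^ 2) := by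
  set M : ℤ := (Fintype.card (Option A) : ℤ) with hM
  set G2 : ℤ := ∑ x : Option A, ∑ y : Option A, ∑ z : Option A, gG f x y z ^ 2 with hG2
  set R : ℤ := ∑ u : Option A, ∑ v : Option A,
    (∑ x : Option A, gG f x u v) * (∑ x : Option A, gG f x u v) with hR
  have hAneg : ∀ u v : Option A,
      (∑ x : Option A, gG f x v u) = -(∑ x : Option A, gG f x u v) := by
    intro u v
    rw [← Finset.sum_neg_distrib]
    exact Finset.sum_congr rfl fun x _ => gswap2 f hodd x u v
  have hQ1 : (∑ _a : Option A, ∑ b : Option A, ∑ c : Option A, ∑ d : Option A,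
      gG f b c d ^ 2) = M * G2 := by
    rw [Finset.sum_const, Finset.card_univ, nsmul_eq_mul, hM, hG2]
  have hQ2 : (∑ a : Option A, ∑ _b : Option A, ∑ c : Option A, ∑ d : Option A,
      gG f a c d ^ 2) = M * G2 := by
    calc (∑ a : Option A, ∑ _b : Option A, ∑ c : Option A, ∑ d : Option A, gG f a c d ^ 2)
        = ∑ a : Option A, M * (∑ c : Option A, ∑ d : Option A, gG f a c d ^ 2) := by
          refine Finset.sum_congr rfl fun a _ => ?_
          rw [Finset.sum_const, Finset.card_univ, nsmul_eq_mul, hM]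
      _ = M * G2 := by rw [← Finset.mul_sum, hG2]
  have hQ3 : (∑ a : Option A, ∑ b : Option A, ∑ _c : Option A, ∑ d : Option A,
      gG f a b d ^ 2) = M * G2 := by
    calc (∑ a : Option A, ∑ b : Option A, ∑ _c : Option A, ∑ d : Option A, gG f a b d ^ 2)
        = ∑ a : Option A, ∑ b : Option A, M * (∑ d : Option A, gG f a b d ^ 2) := by
          refine Finset.sum_congr rfl fun a _ => Finset.sum_congr rfl fun b _ => ?_
          rw [Finset.sum_const, Finset.card_univ, nsmul_eq_mul, hM]
      _ = M * G2 := by simp only [← Finset.mul_sum]; try rw [hG2]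
  have hQ4 : (∑ a : Option A, ∑ b : Option A, ∑ c : Option A, ∑ _d : Option A,
      gG f a b c ^ 2) = M * G2 := by
    calc (∑ a : Option A, ∑ b : Option A, ∑ c : Option A, ∑ _d : Option A, gG f a b c ^ 2)
        = ∑ a : Option A, ∑ b : Option A, ∑ c : Option A, M * gG f a b c ^ 2 := by
          refine Finset.sum_congr rfl fun a _ => Finset.sum_congr rfl fun b _ =>
            Finset.sum_congr rfl fun c _ => ?_
          rw [Finset.sum_const, Finset.card_univ, nsmul_eq_mul, hM]
      _ = M * G2 := by simp only [← Finset.mul_sum]; try rw [hG2]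
  have hC12 : (∑ a : Option A, ∑ b : Option A, ∑ c : Option A, ∑ d : Option A,
      gG f b c d * gG f a c d) = R := by
    calc (∑ a : Option A, ∑ b : Option A, ∑ c : Option A, ∑ d : Option A,
        gG f b c d * gG f a c d)
        = ∑ a : Option A, ∑ c : Option A, ∑ b : Option A, ∑ d : Option A,
            gG f b c d * gG f a c d :=
          Finset.sum_congr rfl fun a _ => Finset.sum_comm
      _ = ∑ c : Option A, ∑ a : Option A, ∑ b : Option A, ∑ d : Option A,
            gG f b c d * gG f a c d := Finset.sum_comm
      _ = ∑ c : Option A, ∑ a : Option A, ∑ d : Option A, ∑ b : Option A,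
            gG f b c d * gG f a c d :=
          Finset.sum_congr rfl fun c _ => Finset.sum_congr rfl fun a _ => Finset.sum_comm
      _ = ∑ c : Option A, ∑ d : Option A, ∑ a : Option A, ∑ b : Option A,
            gG f b c d * gG f a c d :=
          Finset.sum_congr rfl fun c _ => Finset.sum_comm
      _ = ∑ c : Option A, ∑ d : Option A,
            (∑ a : Option A, gG f a c d) * (∑ b : Option A, gG f b c d) := by
          refine Finset.sum_congr rfl fun c _ => Finset.sum_congr rfl fun d _ => ?_
          rw [Finset.sum_mul_sum]
          exact Finset.sum_congr rfl fun a _ => Finset.sum_congr rfl fun b _ =>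
            mul_comm _ _
      _ = R := by rw [hR]
  have hC34 : (∑ a : Option A, ∑ b : Option A, ∑ c : Option A, ∑ d : Option A,
      gG f a b d * gG f a b c) = R := by
    calc (∑ a : Option A, ∑ b : Option A, ∑ c : Option A, ∑ d : Option A,
        gG f a b d * gG f a b c)
        = ∑ a : Option A, ∑ b : Option A,
            (∑ c : Option A, gG f a b c) * (∑ d : Option A, gG f a b d) := by
          refine Finset.sum_congr rfl fun a _ => Finset.sum_congr rfl fun b _ => ?_
          rw [Finset.sum_mul_sum]
          exact Finset.sum_congr rfl fun c _ => Finset.sum_congr rfl fun d _ =>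
            mul_comm _ _
      _ = ∑ a : Option A, ∑ b : Option A,
            (∑ x : Option A, gG f x a b) * (∑ x : Option A, gG f x a b) := by
          refine Finset.sum_congr rfl fun a _ => Finset.sum_congr rfl fun b _ => ?_
          rw [show (∑ c : Option A, gG f a b c) = ∑ c : Option A, gG f c a b from
            Finset.sum_congr rfl fun c _ => gcyc2 f a b c]
      _ = R := by rw [hR]
  have hC23 : (∑ a : Option A, ∑ b : Option A, ∑ c : Option A, ∑ d : Option A,
      gG f a c d * gG f a b d) = R := by
    calc (∑ a : Option A, ∑ b : Option A, ∑ c : Option A, ∑ d : Option A,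
        gG f a c d * gG f a b d)
        = ∑ a : Option A, ∑ b : Option A, ∑ d : Option A, ∑ c : Option A,
            gG f a c d * gG f a b d :=
          Finset.sum_congr rfl fun a _ => Finset.sum_congr rfl fun b _ => Finset.sum_comm
      _ = ∑ a : Option A, ∑ d : Option A, ∑ b : Option A, ∑ c : Option A,
            gG f a c d * gG f a b d :=
          Finset.sum_congr rfl fun a _ => Finset.sum_comm
      _ = ∑ a : Option A, ∑ d : Option A,
            (∑ b : Option A, gG f a b d) * (∑ c : Option A, gG f a c d) := by
          refine Finset.sum_congr rfl fun a _ => Finset.sum_congr rfl fun d _ => ?_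
          rw [Finset.sum_mul_sum]
          exact Finset.sum_congr rfl fun b _ => Finset.sum_congr rfl fun c _ =>
            mul_comm _ _
      _ = ∑ a : Option A, ∑ d : Option A,
            (∑ x : Option A, gG f x d a) * (∑ x : Option A, gG f x d a) := by
          refine Finset.sum_congr rfl fun a _ => Finset.sum_congr rfl fun d _ => ?_
          rw [show (∑ b : Option A, gG f a b d) = ∑ b : Option A, gG f b d a from
            Finset.sum_congr rfl fun b _ => gcyc' f a b d]
      _ = ∑ d : Option A, ∑ a : Option A,
            (∑ x : Option A, gG f x d a) * (∑ x : Option A, gG f x d a) :=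
          Finset.sum_comm
      _ = R := by rw [hR]
  have hC14 : (∑ a : Option A, ∑ b : Option A, ∑ c : Option A, ∑ d : Option A,
      gG f b c d * gG f a b c) = R := by
    calc (∑ a : Option A, ∑ b : Option A, ∑ c : Option A, ∑ d : Option A,
        gG f b c d * gG f a b c)
        = ∑ b : Option A, ∑ a : Option A, ∑ c : Option A, ∑ d : Option A,
            gG f b c d * gG f a b c := Finset.sum_comm
      _ = ∑ b : Option A, ∑ c : Option A, ∑ a : Option A, ∑ d : Option A,
            gG f b c d * gG f a b c :=
          Finset.sum_congr rfl fun b _ => Finset.sum_comm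
      _ = ∑ b : Option A, ∑ c : Option A,
            (∑ a : Option A, gG f a b c) * (∑ d : Option A, gG f b c d) := by
          refine Finset.sum_congr rfl fun b _ => Finset.sum_congr rfl fun c _ => ?_
          rw [Finset.sum_mul_sum]
          exact Finset.sum_congr rfl fun a _ => Finset.sum_congr rfl fun d _ =>
            mul_comm _ _
      _ = ∑ b : Option A, ∑ c : Option A,
            (∑ x : Option A, gG f x b c) * (∑ x : Option A, gG f x b c) := by
          refine Finset.sum_congr rfl fun b _ => Finset.sum_congr rfl fun c _ => ?_
          rw [show (∑ d : Option A, gG f b c d) = ∑ d : Option A, gG f d b c from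
            Finset.sum_congr rfl fun d _ => gcyc2 f b c d]
      _ = R := by rw [hR]
  have hC13 : (∑ a : Option A, ∑ b : Option A, ∑ c : Option A, ∑ d : Option A,
      gG f b c d * gG f a b d) = -R := by
    calc (∑ a : Option A, ∑ b : Option A, ∑ c : Option A, ∑ d : Option A,
        gG f b c d * gG f a b d)
        = ∑ b : Option A, ∑ a : Option A, ∑ c : Option A, ∑ d : Option A,
            gG f b c d * gG f a b d := Finset.sum_comm
      _ = ∑ b : Option A, ∑ a : Option A, ∑ d : Option A, ∑ c : Option A,
            gG f b c d * gG f a b d :=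
          Finset.sum_congr rfl fun b _ => Finset.sum_congr rfl fun a _ => Finset.sum_comm
      _ = ∑ b : Option A, ∑ d : Option A, ∑ a : Option A, ∑ c : Option A,
            gG f b c d * gG f a b d :=
          Finset.sum_congr rfl fun b _ => Finset.sum_comm
      _ = ∑ b : Option A, ∑ d : Option A,
            (∑ a : Option A, gG f a b d) * (∑ c : Option A, gG f b c d) := by
          refine Finset.sum_congr rfl fun b _ => Finset.sum_congr rfl fun d _ => ?_
          rw [Finset.sum_mul_sum]
          exact Finset.sum_congr rfl fun a _ => Finset.sum_congr rfl fun c _ =>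
            mul_comm _ _
      _ = ∑ b : Option A, ∑ d : Option A,
            -((∑ x : Option A, gG f x b d) * (∑ x : Option A, gG f x b d)) := by
          refine Finset.sum_congr rfl fun b _ => Finset.sum_congr rfl fun d _ => ?_
          rw [show (∑ c : Option A, gG f b c d) = ∑ c : Option A, gG f c d b from
            Finset.sum_congr rfl fun c _ => gcyc' f b c d]
          rw [hAneg b d]
          ring
      _ = -R := by simp only [Finset.sum_neg_distrib]; try rw [hR]
  have hC24 : (∑ a : Option A, ∑ b : Option A, ∑ c : Option A, ∑ d : Option A,
      gG f a c d * gG f a b c) = -R := by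
    calc (∑ a : Option A, ∑ b : Option A, ∑ c : Option A, ∑ d : Option A,
        gG f a c d * gG f a b c)
        = ∑ a : Option A, ∑ c : Option A, ∑ b : Option A, ∑ d : Option A,
            gG f a c d * gG f a b c :=
          Finset.sum_congr rfl fun a _ => Finset.sum_comm
      _ = ∑ a : Option A, ∑ c : Option A,
            (∑ b : Option A, gG f a b c) * (∑ d : Option A, gG f a c d) := by
          refine Finset.sum_congr rfl fun a _ => Finset.sum_congr rfl fun c _ => ?_
          rw [Finset.sum_mul_sum]
          exact Finset.sum_congr rfl fun b _ => Finset.sum_congr rfl fun d _ =>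
            mul_comm _ _
      _ = ∑ a : Option A, ∑ c : Option A,
            -((∑ x : Option A, gG f x a c) * (∑ x : Option A, gG f x a c)) := by
          refine Finset.sum_congr rfl fun a _ => Finset.sum_congr rfl fun c _ => ?_
          rw [show (∑ b : Option A, gG f a b c) = ∑ b : Option A, gG f b c a from
            Finset.sum_congr rfl fun b _ => gcyc' f a b c]
          rw [show (∑ d : Option A, gG f a c d) = ∑ d : Option A, gG f d a c from
            Finset.sum_congr rfl fun d _ => gcyc2 f a c d]
          rw [hAneg a c]
          ring
      _ = -R := by simp only [Finset.sum_neg_distrib]; try rw [hR]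
  have hexp : ∀ a b c d : Option A, sS f a b c d ^ 2 =
      gG f b c d ^ 2 + gG f a c d ^ 2 + gG f a b d ^ 2 + gG f a b c ^ 2
      + (-2) * (gG f b c d * gG f a c d) + (-2) * (gG f a b d * gG f a b c)
      + (-2) * (gG f a c d * gG f a b d) + (-2) * (gG f b c d * gG f a b c)
      + 2 * (gG f b c d * gG f a b d) + 2 * (gG f a c d * gG f a b c) := by
    intro a b c d
    simp only [sS]
    ring
  have key : (∑ a : Option A, ∑ b : Option A, ∑ c : Option A, ∑ d : Option A,
      sS f a b c d ^ 2) = 4 * M * G2 - 12 * R := by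
    simp only [hexp]
    simp only [Finset.sum_add_distrib, ← Finset.mul_sum]
    rw [hQ1, hQ2, hQ3, hQ4, hC12, hC34, hC23, hC14, hC13, hC24]
    ring
  rw [key, hG2, G2val f hzero hpm, hR, Rval f hzero hodd hpm, hM, Fintype.card_option]
  push_cast
  ring
end Stmt17Aux6

/-- let `A` be a finite abelian group with `|A| ≡ 3 (mod 4)` and `f` an
admissible function on `A`.  If the `4`-graph `H_f` contains no copy of `H(4)` (no `5`
vertices span `3` or more edges) and has exactly `((|A|+1)/16)·C(|A|+1,3)` edges, then
`(f ⋆ f)(x) = 1` for every nonzero `x ∈ A`. -/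
theorem statement17 (A : Type) [AddCommGroup A] [Fintype A]
    (hA : Fintype.card A % 4 = 3) (f : A → ℤ)
    (hzero : ∀ a, f a = 0 ↔ a = 0)
    (hodd : ∀ a, f (-a) = - f a)
    (hpm : ∀ a, f a = 1 ∨ f a = 0 ∨ f a = -1)
    (hfree : ∀ S : Finset (Option A), S.card = 5 →
      {X ∈ hypOf f | X ⊆ S}.ncard ≤ 2)
    (hcard : ((hypOf f).ncard : ℚ) =
      ((Fintype.card A : ℚ) + 1) / 16 * ((Fintype.card A + 1).choose 3 : ℚ)) :
    ∀ x : A, x ≠ 0 → ∑ a : A, f (x - a) * f a = 1 := by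
  classical
  intro x hx
  obtain ⟨k, hk⟩ : ∃ k, Fintype.card A = k + 1 :=
    ⟨Fintype.card A - 1, (Nat.succ_pred_eq_of_pos Fintype.card_pos).symm⟩
  have hchN : (Fintype.card A + 1).choose 3 * 6 = (k + 2) * (k + 1) * k := by
    have h1 : (k + 2).choose 3 * 6 = (k + 2).descFactorial 3 := by
      rw [Nat.choose_eq_descFactorial_div_factorial]
      exact Nat.div_mul_cancel (Nat.factorial_dvd_descFactorial (k + 2) 3)
    have h2 : (k + 2).descFactorial 3 = (k + 2) * (k + 1) * k := by
      simp [Nat.descFactorial]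
      ring
    rw [show Fintype.card A + 1 = k + 2 from by omega]
    exact h1.trans h2
  have hchQ : ((Fintype.card A + 1).choose 3 : ℚ) = ((k : ℚ) + 2) * ((k : ℚ) + 1) * k / 6 := by
    rw [eq_div_iff (by norm_num : (6 : ℚ) ≠ 0)]
    exact_mod_cast hchN
  have hcard' : 384 * (((hypOf f).ncard : ℤ)) = 4 * ((k : ℤ) + 2) ^ 2 * ((k : ℤ) + 1) * k := by
    have hq : 384 * (((hypOf f).ncard : ℚ)) = 4 * ((k : ℚ) + 2) ^ 2 * ((k : ℚ) + 1) * k := by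
      rw [hcard, hchQ, hk]
      push_cast
      ring
    exact_mod_cast hq
  have hb := stmt17_bound f hodd
  have hT := Tval f hzero hodd hpm
  have hkZ : (Fintype.card A : ℤ) = (k : ℤ) + 1 := by exact_mod_cast hk
  rw [hT, hkZ, hcard'] at hb
  set Sf : ℤ := ∑ c : A, (if c = 0 then 0 else (1 - ∑ a : A, f (c - a) * f a) ^ 2) with hSf
  have hSfnn : (0 : ℤ) ≤ Sf := by
    rw [hSf]
    refine Finset.sum_nonneg fun c _ => ?_
    by_cases h : c = 0
    · simp [h]
    · simp only [if_neg h]; positivity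
  have hale : 12 * ((k : ℤ) + 1) * Sf ≤ 0 := by
    ring_nf at hb ⊢
    linarith
  have hprod0 : 12 * ((k : ℤ) + 1) * Sf = 0 :=
    le_antisymm hale (mul_nonneg (by positivity) hSfnn)
  have hSf0 : Sf = 0 := by
    rcases mul_eq_zero.mp hprod0 with h | h
    · exfalso
      have : (0 : ℤ) < 12 * ((k : ℤ) + 1) := by positivity
      omega
    · exact h
  have hall := (Finset.sum_eq_zero_iff_of_nonneg (s := Finset.univ)
      (f := fun c : A => if c = 0 then (0 : ℤ) else (1 - ∑ a : A, f (c - a) * f a) ^ 2)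
      (fun c _ => by
        by_cases h : c = 0
        · simp [h]
        · simp only [if_neg h]; positivity)).mp (by rw [← hSf]; exact hSf0)
  have hx0 : (if x = 0 then (0 : ℤ) else (1 - ∑ a : A, f (x - a) * f a) ^ 2) = 0 :=
    hall x (Finset.mem_univ x)
  rw [if_neg hx] at hx0
  have hfin : (1 - ∑ a : A, f (x - a) * f a) = 0 := by
    exact sq_eq_zero_iff.mp hx0
  linarith
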